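/- Let η = (K1, K2, K3, K4, κ3, κ6, κ9, κ12) be a tuple of positive real parameters with a(η) > 0 and b(η) < 0. If −b(η) ≤ 4·K2^{−1}·(K1^2·K2^3·K3·K4^2·κ3·κ6^2·κ9^2·κ12·a(η))^{1/4} + 3·(K1·K4^2·κ6^2·κ9^2·a(η))^{1/3} + 2·(K2·K3·κ3·κ12·a(η))^{1/2} + 3·K3^{−1}·(K1^2·K2·K3^2·K4·κ3·κ6^2·κ9^2·κ12)^{1/3}, then p_{η,H}(x1,x3) ≥ 0 for all x1 > 0, x3 > 0. -/
import Mathlib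

private lemma amgm2' {u v g : ℝ} (hu : 0 ≤ u) (hv : 0 ≤ v) (hg : 0 ≤ g)
    (h : g ^ 2 = u * v) : 2 * g ≤ u + v := by
  nlinarith [sq_nonneg (u - v), sq_nonneg (u + v - 2 * g)]

private lemma amgm3' {u v w g : ℝ} (hu : 0 ≤ u) (hv : 0 ≤ v) (hw : 0 ≤ w) (hg : 0 ≤ g)
    (h : g ^ 3 = u * v * w) : 3 * g ≤ u + v + w := by
  have key := Real.geom_mean_le_arith_mean3_weighted (by norm_num : (0:ℝ) ≤ 1/3)
    (by norm_num : (0:ℝ) ≤ 1/3) (by norm_num : (0:ℝ) ≤ 1/3) hu hv hw (by norm_num)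
  have hg3 : g = u ^ ((1:ℝ)/3) * v ^ ((1:ℝ)/3) * w ^ ((1:ℝ)/3) := by
    rw [← Real.mul_rpow hu hv, ← Real.mul_rpow (mul_nonneg hu hv) hw, ← h,
      ← Real.rpow_natCast g 3, ← Real.rpow_mul hg]
    norm_num
  rw [hg3]; linarith

private lemma amgm4' {u v w z g : ℝ} (hu : 0 ≤ u) (hv : 0 ≤ v) (hw : 0 ≤ w) (hz : 0 ≤ z)
    (hg : 0 ≤ g) (h : g ^ 4 = u * v * w * z) : 4 * g ≤ u + v + w + z := by
  have key := Real.geom_mean_le_arith_mean4_weighted (by norm_num : (0:ℝ) ≤ 1/4)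
    (by norm_num : (0:ℝ) ≤ 1/4) (by norm_num : (0:ℝ) ≤ 1/4) (by norm_num : (0:ℝ) ≤ 1/4)
    hu hv hw hz (by norm_num)
  have hg4 : g = u ^ ((1:ℝ)/4) * v ^ ((1:ℝ)/4) * w ^ ((1:ℝ)/4) * z ^ ((1:ℝ)/4) := by
    rw [← Real.mul_rpow hu hv, ← Real.mul_rpow (mul_nonneg hu hv) hw,
      ← Real.mul_rpow (mul_nonneg (mul_nonneg hu hv) hw) hz, ← h,
      ← Real.rpow_natCast g 4, ← Real.rpow_mul hg]
    norm_num
  rw [hg4]; linarith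

/-- The bivariate polynomial `p_{η,H}` supported on the hexagonal face `H`. -/
def pEtaH (K1 K2 K3 K4 κ3 κ6 κ9 κ12 x1 x3 : ℝ) : ℝ :=
  K2 * κ3 * (κ3 * κ12 - κ6 * κ9) *
      (K2 * K4 * κ3 * κ9 * x1 ^ 4 * x3 ^ 2 + K1 * K3 * κ6 * κ12 * x1 ^ 2 * x3 ^ 2
        + K2 * K3 * κ3 * κ12 * x1 ^ 3 * x3 ^ 2)
    + K1 * K2 * K3 * κ3 * κ6 * κ12 * ((K2 + K3) * κ3 * κ12 - (K1 + K4) * κ6 * κ9)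
        * x1 ^ 2 * x3
    + K1 * κ6 *
        (K2 ^ 2 * K4 * κ3 ^ 2 * κ9 ^ 2 * x1 ^ 4 * x3
          + 2 * K2 * K3 * K4 * κ3 ^ 2 * κ9 * κ12 * x1 ^ 3 * x3
          + K1 * K2 * K3 * K4 * κ3 * κ6 * κ9 * κ12 * x1 ^ 2
          + 2 * K1 * K2 * K3 * κ3 * κ6 * κ12 ^ 2 * x1 * x3
          + K1 * K2 * K3 ^ 2 * κ3 * κ6 * κ12 ^ 2 * x1
          + K1 * K3 ^ 2 * κ6 ^ 2 * κ12 ^ 2 * x3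
          + K1 ^ 2 * K3 ^ 2 * κ6 ^ 2 * κ12 ^ 2)

/-- Sufficient condition for nonnegativity of `p_{η,H}` on the positive
orthant coming from the pure cover. -/
theorem pEtaH_nonneg_of_cover10
    (K1 K2 K3 K4 κ3 κ6 κ9 κ12 : ℝ)
    (hK1 : 0 < K1) (hK2 : 0 < K2) (hK3 : 0 < K3) (hK4 : 0 < K4)
    (hκ3 : 0 < κ3) (hκ6 : 0 < κ6) (hκ9 : 0 < κ9) (hκ12 : 0 < κ12)
    (ha : 0 < κ3 * κ12 - κ6 * κ9)
    (hb : (K2 + K3) * κ3 * κ12 - (K1 + K4) * κ6 * κ9 < 0)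
    (hcond : -((K2 + K3) * κ3 * κ12 - (K1 + K4) * κ6 * κ9) ≤
      4 * K2⁻¹ * (K1 ^ 2 * K2 ^ 3 * K3 * K4 ^ 2 * κ3 * κ6 ^ 2 * κ9 ^ 2 * κ12
            * (κ3 * κ12 - κ6 * κ9)) ^ ((1 : ℝ) / 4)
        + 3 * (K1 * K4 ^ 2 * κ6 ^ 2 * κ9 ^ 2 * (κ3 * κ12 - κ6 * κ9)) ^ ((1 : ℝ) / 3)
        + 2 * (K2 * K3 * κ3 * κ12 * (κ3 * κ12 - κ6 * κ9)) ^ ((1 : ℝ) / 2)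
        + 3 * K3⁻¹ * (K1 ^ 2 * K2 * K3 ^ 2 * K4 * κ3 * κ6 ^ 2 * κ9 ^ 2 * κ12) ^ ((1 : ℝ) / 3)) :
    ∀ x1 x3 : ℝ, 0 < x1 → 0 < x3 → 0 ≤ pEtaH K1 K2 K3 K4 κ3 κ6 κ9 κ12 x1 x3 := by
  intro x1 x3 hx1 hx3
  have hA1 : (0:ℝ) < K1 ^ 2 * K2 ^ 3 * K3 * K4 ^ 2 * κ3 * κ6 ^ 2 * κ9 ^ 2 * κ12
      * (κ3 * κ12 - κ6 * κ9) := by positivity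
  have hA2 : (0:ℝ) < K1 * K4 ^ 2 * κ6 ^ 2 * κ9 ^ 2 * (κ3 * κ12 - κ6 * κ9) := by positivity
  have hA3 : (0:ℝ) < K2 * K3 * κ3 * κ12 * (κ3 * κ12 - κ6 * κ9) := by positivity
  have hA4 : (0:ℝ) < K1 ^ 2 * K2 * K3 ^ 2 * K4 * κ3 * κ6 ^ 2 * κ9 ^ 2 * κ12 := by positivity
  set r1 : ℝ := (K1 ^ 2 * K2 ^ 3 * K3 * K4 ^ 2 * κ3 * κ6 ^ 2 * κ9 ^ 2 * κ12
      * (κ3 * κ12 - κ6 * κ9)) ^ ((1 : ℝ) / 4) with hr1def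
  set r2 : ℝ := (K1 * K4 ^ 2 * κ6 ^ 2 * κ9 ^ 2 * (κ3 * κ12 - κ6 * κ9)) ^ ((1 : ℝ) / 3)
    with hr2def
  set r3 : ℝ := (K2 * K3 * κ3 * κ12 * (κ3 * κ12 - κ6 * κ9)) ^ ((1 : ℝ) / 2) with hr3def
  set r4 : ℝ := (K1 ^ 2 * K2 * K3 ^ 2 * K4 * κ3 * κ6 ^ 2 * κ9 ^ 2 * κ12) ^ ((1 : ℝ) / 3)
    with hr4def
  have hr1 : 0 ≤ r1 := Real.rpow_nonneg hA1.le _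
  have hr2 : 0 ≤ r2 := Real.rpow_nonneg hA2.le _
  have hr3 : 0 ≤ r3 := Real.rpow_nonneg hA3.le _
  have hr4 : 0 ≤ r4 := Real.rpow_nonneg hA4.le _
  have hr1p : r1 ^ (4:ℕ) = K1 ^ 2 * K2 ^ 3 * K3 * K4 ^ 2 * κ3 * κ6 ^ 2 * κ9 ^ 2 * κ12
      * (κ3 * κ12 - κ6 * κ9) := by
    rw [hr1def, ← Real.rpow_natCast _ 4, ← Real.rpow_mul hA1.le]; norm_num
  have hr2p : r2 ^ (3:ℕ) = K1 * K4 ^ 2 * κ6 ^ 2 * κ9 ^ 2 * (κ3 * κ12 - κ6 * κ9) := by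
    rw [hr2def, ← Real.rpow_natCast _ 3, ← Real.rpow_mul hA2.le]; norm_num
  have hr3p : r3 ^ (2:ℕ) = K2 * K3 * κ3 * κ12 * (κ3 * κ12 - κ6 * κ9) := by
    rw [hr3def, ← Real.rpow_natCast _ 2, ← Real.rpow_mul hA3.le]; norm_num
  have hr4p : r4 ^ (3:ℕ) = K1 ^ 2 * K2 * K3 ^ 2 * K4 * κ3 * κ6 ^ 2 * κ9 ^ 2 * κ12 := by
    rw [hr4def, ← Real.rpow_natCast _ 3, ← Real.rpow_mul hA4.le]; norm_num
  -- group 1 : T1 ↔ {M2, M5, M5, M10}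
  have hG1 : 4 * (K1 * K3 * κ3 * κ6 * κ12 * r1 * (x1 ^ 2 * x3)) ≤
      K2 * κ3 * (κ3 * κ12 - κ6 * κ9) * (K1 * K3 * κ6 * κ12 * x1 ^ 2 * x3 ^ 2)
      + K1 * κ6 * (K2 * K3 * K4 * κ3 ^ 2 * κ9 * κ12 * x1 ^ 3 * x3)
      + K1 * κ6 * (K2 * K3 * K4 * κ3 ^ 2 * κ9 * κ12 * x1 ^ 3 * x3)
      + K1 * κ6 * (K1 ^ 2 * K3 ^ 2 * κ6 ^ 2 * κ12 ^ 2) := by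
    refine amgm4' (by positivity) (by positivity) (by positivity) (by positivity)
      (by positivity) ?_
    linear_combination (K1 * K3 * κ3 * κ6 * κ12) ^ 4 * (x1 ^ 2 * x3) ^ 4 * hr1p
  -- group 2 : T2 ↔ {M1, M6, M9}
  have hG2 : 3 * (K1 * K2 * K3 * κ3 * κ6 * κ12 * r2 * (x1 ^ 2 * x3)) ≤
      K2 * κ3 * (κ3 * κ12 - κ6 * κ9) * (K2 * K4 * κ3 * κ9 * x1 ^ 4 * x3 ^ 2)
      + K1 * κ6 * (K1 * K2 * K3 * K4 * κ3 * κ6 * κ9 * κ12 * x1 ^ 2)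
      + K1 * κ6 * (K1 * K3 ^ 2 * κ6 ^ 2 * κ12 ^ 2 * x3) := by
    refine amgm3' (by positivity) (by positivity) (by positivity) (by positivity) ?_
    linear_combination (K1 * K2 * K3 * κ3 * κ6 * κ12) ^ 3 * (x1 ^ 2 * x3) ^ 3 * hr2p
  -- group 3 : T3 ↔ {M3, M8}
  have hG3 : 2 * (K1 * K2 * K3 * κ3 * κ6 * κ12 * r3 * (x1 ^ 2 * x3)) ≤
      K2 * κ3 * (κ3 * κ12 - κ6 * κ9) * (K2 * K3 * κ3 * κ12 * x1 ^ 3 * x3 ^ 2)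
      + K1 * κ6 * (K1 * K2 * K3 ^ 2 * κ3 * κ6 * κ12 ^ 2 * x1) := by
    refine amgm2' (by positivity) (by positivity) (by positivity) ?_
    linear_combination (K1 * K2 * K3 * κ3 * κ6 * κ12) ^ 2 * (x1 ^ 2 * x3) ^ 2 * hr3p
  -- group 4 : T4 ↔ {M4, M7, M7}
  have hG4 : 3 * (K1 * K2 * κ3 * κ6 * κ12 * r4 * (x1 ^ 2 * x3)) ≤
      K1 * κ6 * (K2 ^ 2 * K4 * κ3 ^ 2 * κ9 ^ 2 * x1 ^ 4 * x3)
      + K1 * κ6 * (K1 * K2 * K3 * κ3 * κ6 * κ12 ^ 2 * x1 * x3)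
      + K1 * κ6 * (K1 * K2 * K3 * κ3 * κ6 * κ12 ^ 2 * x1 * x3) := by
    refine amgm3' (by positivity) (by positivity) (by positivity) (by positivity) ?_
    linear_combination (K1 * K2 * κ3 * κ6 * κ12) ^ 3 * (x1 ^ 2 * x3) ^ 3 * hr4p
  have hpos : (0:ℝ) ≤ K1 * K2 * K3 * κ3 * κ6 * κ12 * x1 ^ 2 * x3 := by positivity
  have hmul := mul_le_mul_of_nonneg_left hcond hpos
  have hK2inv : K2 * K2⁻¹ = 1 := mul_inv_cancel₀ hK2.ne'
  have hK3inv : K3 * K3⁻¹ = 1 := mul_inv_cancel₀ hK3.ne'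
  have hbridge : K1 * K2 * K3 * κ3 * κ6 * κ12 * x1 ^ 2 * x3 *
      (4 * K2⁻¹ * r1 + 3 * r2 + 2 * r3 + 3 * K3⁻¹ * r4) =
      4 * (K1 * K3 * κ3 * κ6 * κ12 * r1 * (x1 ^ 2 * x3))
      + 3 * (K1 * K2 * K3 * κ3 * κ6 * κ12 * r2 * (x1 ^ 2 * x3))
      + 2 * (K1 * K2 * K3 * κ3 * κ6 * κ12 * r3 * (x1 ^ 2 * x3))
      + 3 * (K1 * K2 * κ3 * κ6 * κ12 * r4 * (x1 ^ 2 * x3)) := by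
    linear_combination (4 * r1 * x1 ^ 2 * x3 * K1 * K3 * κ3 * κ6 * κ12) * hK2inv
      + (3 * r4 * x1 ^ 2 * x3 * K1 * K2 * κ3 * κ6 * κ12) * hK3inv
  rw [hbridge] at hmul
  have hsum : pEtaH K1 K2 K3 K4 κ3 κ6 κ9 κ12 x1 x3 =
      (K2 * κ3 * (κ3 * κ12 - κ6 * κ9) * (K1 * K3 * κ6 * κ12 * x1 ^ 2 * x3 ^ 2)
      + K1 * κ6 * (K2 * K3 * K4 * κ3 ^ 2 * κ9 * κ12 * x1 ^ 3 * x3)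
      + K1 * κ6 * (K2 * K3 * K4 * κ3 ^ 2 * κ9 * κ12 * x1 ^ 3 * x3)
      + K1 * κ6 * (K1 ^ 2 * K3 ^ 2 * κ6 ^ 2 * κ12 ^ 2))
      + (K2 * κ3 * (κ3 * κ12 - κ6 * κ9) * (K2 * K4 * κ3 * κ9 * x1 ^ 4 * x3 ^ 2)
      + K1 * κ6 * (K1 * K2 * K3 * K4 * κ3 * κ6 * κ9 * κ12 * x1 ^ 2)
      + K1 * κ6 * (K1 * K3 ^ 2 * κ6 ^ 2 * κ12 ^ 2 * x3))
      + (K2 * κ3 * (κ3 * κ12 - κ6 * κ9) * (K2 * K3 * κ3 * κ12 * x1 ^ 3 * x3 ^ 2)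
      + K1 * κ6 * (K1 * K2 * K3 ^ 2 * κ3 * κ6 * κ12 ^ 2 * x1))
      + (K1 * κ6 * (K2 ^ 2 * K4 * κ3 ^ 2 * κ9 ^ 2 * x1 ^ 4 * x3)
      + K1 * κ6 * (K1 * K2 * K3 * κ3 * κ6 * κ12 ^ 2 * x1 * x3)
      + K1 * κ6 * (K1 * K2 * K3 * κ3 * κ6 * κ12 ^ 2 * x1 * x3))
      - K1 * K2 * K3 * κ3 * κ6 * κ12 * x1 ^ 2 * x3 *
          (-((K2 + K3) * κ3 * κ12 - (K1 + K4) * κ6 * κ9)) := by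
    unfold pEtaH; ring
  rw [hsum]
  linarith [hG1, hG2, hG3, hG4, hmul]
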